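/- For every tree T with at least 2 vertices, the set L of leaves of T is a strong geodetic set, and moreover for any single leaf u ∈ L, the shortest paths from u to the other leaves already cover all vertices of T (i.e., every vertex of T lies on the unique path from u to some leaf). In particular sgc(T) = 1. -/

import Mathlib

open SimpleGraph

/-- A choice of one fixed shortest path (geodesic) between each pair of vertices,
symmetric in the sense that the path from `v` to `u` is the reverse of the one
from `u` to `v`. -/
def StrongGeodeticChoice {V : Type*} (G : SimpleGraph V) (p : ∀ u v : V, G.Walk u v) : Prop :=
  ∀ u v : V, (p u v).IsPath ∧ (p u v).length = G.dist u v ∧ p v u = (p u v).reverse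

/-- `S` is a strong geodetic set of `G`: one can fix one shortest path between each
pair of vertices of `S` so that every vertex of `G` lies on some fixed path. -/
def IsStrongGeodeticSet {V : Type*} (G : SimpleGraph V) (S : Set V) : Prop :=
  ∃ p : ∀ u v : V, G.Walk u v, StrongGeodeticChoice G p ∧
    ∀ w : V, ∃ u ∈ S, ∃ v ∈ S, w ∈ (p u v).support

/-- The strong geodetic number of `G`. -/
noncomputable def sg {V : Type*} (G : SimpleGraph V) : ℕ :=
  sInf {n | ∃ S : Set V, S.ncard = n ∧ IsStrongGeodeticSet G S}

/-- The strong geodetic core number of `G`: the minimum, over minimum strong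
geodetic sets `S` together with a choice of fixed geodesics witnessing them,
of the size of a subset `X ⊆ S` such that the fixed paths with an endpoint in `X`
already cover all vertices. -/
noncomputable def sgc {V : Type*} (G : SimpleGraph V) : ℕ :=
  sInf {k | ∃ (S X : Set V) (p : ∀ u v : V, G.Walk u v),
    StrongGeodeticChoice G p ∧ S.ncard = sg G ∧
    (∀ w : V, ∃ u ∈ S, ∃ v ∈ S, w ∈ (p u v).support) ∧
    X ⊆ S ∧ X.ncard = k ∧
    (∀ w : V, ∃ u ∈ X, ∃ v ∈ S, w ∈ (p u v).support)}

/-- `A` is a geodetic set: every vertex lies on some shortest path between two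
vertices of `A`. -/
def IsGeodeticSet {V : Type*} (G : SimpleGraph V) (A : Set V) : Prop :=
  ∀ w : V, ∃ u ∈ A, ∃ v ∈ A, ∃ q : G.Walk u v, q.length = G.dist u v ∧ w ∈ q.support

/-- The geodetic number of `G`. -/
noncomputable def geodeticNumber {V : Type*} (G : SimpleGraph V) : ℕ :=
  sInf {n | ∃ A : Set V, A.ncard = n ∧ IsGeodeticSet G A}

section TreeAux

variable {V : Type*} {T : SimpleGraph V}

/-- The unique path between two vertices of a tree. -/
noncomputable def tpath (hT : T.IsTree) (u v : V) : T.Walk u v :=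
  (hT.existsUnique_path u v).choose

lemma tpath_isPath (hT : T.IsTree) (u v : V) : (tpath hT u v).IsPath :=
  (hT.existsUnique_path u v).choose_spec.1

lemma tpath_eq (hT : T.IsTree) {u v : V} (q : T.Walk u v) (hq : q.IsPath) :
    q = tpath hT u v :=
  (hT.existsUnique_path u v).choose_spec.2 q hq

lemma path_length_eq_dist (hT : T.IsTree) {u v : V} (q : T.Walk u v) (hq : q.IsPath) :
    q.length = T.dist u v := by
  obtain ⟨r, hr, hrl⟩ := (hT.isConnected.preconnected u v).exists_path_of_dist
  rw [tpath_eq hT q hq, ← tpath_eq hT r hr]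
  exact hrl

lemma tpath_length (hT : T.IsTree) (u v : V) : (tpath hT u v).length = T.dist u v :=
  path_length_eq_dist hT _ (tpath_isPath hT u v)

lemma tpath_reverse (hT : T.IsTree) (u v : V) :
    tpath hT v u = (tpath hT u v).reverse :=
  (tpath_eq hT (tpath hT u v).reverse ((tpath_isPath hT u v).reverse)).symm

lemma tpath_choice (hT : T.IsTree) : StrongGeodeticChoice T (tpath hT) :=
  fun u v => ⟨tpath_isPath hT u v, tpath_length hT u v, tpath_reverse hT u v⟩

lemma exists_adj [Fintype V] (hT : T.IsTree) (h2 : 2 ≤ Fintype.card V) (v : V) :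
    ∃ x, T.Adj v x := by
  obtain ⟨y, hy⟩ := Fintype.exists_ne_of_one_lt_card (by omega) v
  obtain ⟨r⟩ := hT.isConnected.preconnected v y
  obtain ⟨x, hadj, r', rfl⟩ := r.exists_eq_cons_of_ne (Ne.symm hy)
  exact ⟨x, hadj⟩

lemma tree_key [Fintype V] [DecidableRel T.Adj] (hT : T.IsTree) (h2 : 2 ≤ Fintype.card V)
    (u w : V) : ∃ v : V, T.degree v = 1 ∧ w ∈ (tpath hT u v).support := by
  classical
  obtain ⟨v, hvA, hmax⟩ := Finset.exists_max_image
    (Finset.univ.filter (fun v => w ∈ (tpath hT u v).support)) (fun v => T.dist u v)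
    ⟨w, by simp [Walk.end_mem_support]⟩
  simp only [Finset.mem_filter, Finset.mem_univ, true_and] at hvA hmax
  -- every neighbor of v lies on the path from u to v
  have hnbr : ∀ x, T.Adj v x → x ∈ (tpath hT u v).support := by
    intro x hvx
    by_contra hx
    have hpath : ((tpath hT u v).concat hvx).IsPath := by
      rw [Walk.isPath_def, Walk.support_concat, List.nodup_append]
      refine ⟨(tpath_isPath hT u v).support_nodup, List.nodup_singleton x, ?_⟩
      intro a ha b hb hab
      rw [List.mem_singleton] at hb
      subst hb
      subst hab
      exact hx ha
    have hwx : w ∈ ((tpath hT u v).concat hvx).support := by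
      rw [Walk.support_concat]
      exact List.mem_append_left _ hvA
    rw [tpath_eq hT _ hpath] at hwx
    have hle := hmax x hwx
    have hdx : T.dist u v + 1 = T.dist u x := by
      rw [← path_length_eq_dist hT _ hpath, Walk.length_concat, tpath_length hT u v]
    omega
  have hvu : v ≠ u := by
    rintro rfl
    obtain ⟨x, hx⟩ := exists_adj hT h2 v
    have hmem := hnbr x hx
    have hnil : tpath hT v v = Walk.nil := (tpath_eq hT Walk.nil (by simp)).symm
    rw [hnil] at hmem
    simp only [Walk.support_nil, List.mem_singleton] at hmem
    exact hx.ne' hmem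
  refine ⟨v, ?_, hvA⟩
  set p := tpath hT u v with hp
  have hplen : 1 ≤ p.length := by
    rcases Nat.eq_zero_or_pos p.length with h0 | h1
    · exact absurd (Walk.eq_of_length_eq_zero h0) (Ne.symm hvu)
    · exact h1
  have huniq : ∀ x, T.Adj v x → x = p.getVert (p.length - 1) := by
    intro x hvx
    have hxs := hnbr x hvx
    have hd : p.dropUntil x hxs = Walk.cons hvx.symm Walk.nil :=
      (hT.existsUnique_path x v).unique ((tpath_isPath hT u v).dropUntil hxs)
        (by simp [Walk.isPath_def, hvx.ne'])
    have hx1 : p.getVert ((p.takeUntil x hxs).length) = x := by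
      have h : ((p.takeUntil x hxs).append (p.dropUntil x hxs)).getVert
          ((p.takeUntil x hxs).length) = x := by
        rw [Walk.getVert_append, if_neg (lt_irrefl _), Nat.sub_self, Walk.getVert_zero]
      rwa [p.take_spec hxs] at h
    have hlen2 : (p.takeUntil x hxs).length + 1 = p.length := by
      have h := congrArg Walk.length (p.take_spec hxs)
      rw [Walk.length_append, hd] at h
      simpa using h
    rw [← hx1]
    congr 1
    omega
  have hsub : T.neighborFinset v ⊆ {p.getVert (p.length - 1)} := fun x hx =>
    Finset.mem_singleton.mpr (huniq x ((T.mem_neighborFinset v x).mp hx))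
  have hle1 : T.degree v ≤ 1 := by
    rw [← SimpleGraph.card_neighborFinset_eq_degree]
    simpa using Finset.card_le_card hsub
  have hge1 : 0 < T.degree v := by
    rw [SimpleGraph.degree_pos_iff_exists_adj]
    exact exists_adj hT h2 v
  omega

lemma leaf_endpoint [Fintype V] [DecidableRel T.Adj] [DecidableEq V] (hT : T.IsTree)
    {a b w : V} (q : T.Walk a b) (hq : q.IsPath) (hw : w ∈ q.support)
    (hdeg : T.degree w = 1) : w = a ∨ w = b := by
  by_contra hc
  push_neg at hc
  obtain ⟨hwa, hwb⟩ := hc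
  set t := q.takeUntil w hw with ht
  set d := q.dropUntil w hw with hd
  obtain ⟨x, hxadj, t', htr⟩ := Walk.exists_eq_cons_of_ne hwa t.reverse
  have hxt : x ∈ t.support := by
    have hx : x ∈ t.reverse.support := by
      rw [htr, Walk.support_cons]
      exact List.mem_cons_of_mem _ (Walk.start_mem_support t')
    simpa [Walk.support_reverse] using hx
  obtain ⟨y, hyadj, d', hdr⟩ := Walk.exists_eq_cons_of_ne hwb d
  have hyd : y ∈ d.support.tail := by
    rw [hdr, Walk.support_cons]
    exact Walk.start_mem_support d'
  have hnd := hq.support_nodup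
  rw [← q.take_spec hw, Walk.support_append, List.nodup_append] at hnd
  have hxy : x ≠ y := fun h => hnd.2.2 x hxt y hyd h
  have hsubn : ({x, y} : Finset V) ⊆ T.neighborFinset w := by
    intro z hz
    simp only [Finset.mem_insert, Finset.mem_singleton] at hz
    rcases hz with rfl | rfl
    · exact (T.mem_neighborFinset w z).mpr hxadj
    · exact (T.mem_neighborFinset w z).mpr hyadj
  have hcard := Finset.card_le_card hsubn
  rw [Finset.card_insert_of_notMem (by simp [hxy]), Finset.card_singleton] at hcard
  have : 2 ≤ T.degree w := by
    rw [← SimpleGraph.card_neighborFinset_eq_degree]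
    exact hcard
  omega

end TreeAux

theorem stmt1 {V : Type*} [Fintype V] (T : SimpleGraph V) [DecidableRel T.Adj]
    (hT : T.IsTree) (h2 : 2 ≤ Fintype.card V) :
    IsStrongGeodeticSet T {v | T.degree v = 1} ∧
    (∀ u : V, T.degree u = 1 → ∀ w : V, ∃ v : V, T.degree v = 1 ∧
      ∃ q : T.Walk u v, q.IsPath ∧ q.length = T.dist u v ∧ w ∈ q.support) ∧
    sgc T = 1 := by
  classical
  set L : Set V := {v | T.degree v = 1} with hL
  have hch : StrongGeodeticChoice T (tpath hT) := tpath_choice hT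
  have hne : Nonempty V := Fintype.card_pos_iff.mp (by omega)
  obtain ⟨w₀⟩ := hne
  obtain ⟨u₀, hu₀, -⟩ := tree_key hT h2 w₀ w₀
  have cover : ∀ w : V, ∃ v ∈ L, w ∈ (tpath hT u₀ v).support := by
    intro w
    obtain ⟨v, hv, hw⟩ := tree_key hT h2 u₀ w
    exact ⟨v, hv, hw⟩
  have hu₀L : u₀ ∈ L := hu₀
  have hSGS : IsStrongGeodeticSet T L := by
    refine ⟨tpath hT, hch, fun w => ?_⟩
    obtain ⟨v, hv, hw⟩ := cover w
    exact ⟨u₀, hu₀L, v, hv, hw⟩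
  have part2 : ∀ u : V, T.degree u = 1 → ∀ w : V, ∃ v : V, T.degree v = 1 ∧
      ∃ q : T.Walk u v, q.IsPath ∧ q.length = T.dist u v ∧ w ∈ q.support := by
    intro u _ w
    obtain ⟨v, hv, hw⟩ := tree_key hT h2 u w
    exact ⟨v, hv, tpath hT u v, tpath_isPath hT u v, tpath_length hT u v, hw⟩
  have hsubL : ∀ S : Set V, IsStrongGeodeticSet T S → L ⊆ S := by
    rintro S ⟨p', hp', hcov⟩ w hwL
    obtain ⟨a, ha, b, hb, hw⟩ := hcov w
    rcases leaf_endpoint hT (p' a b) (hp' a b).1 hw hwL with rfl | rfl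
    · exact ha
    · exact hb
  have hsg : sg T = L.ncard := by
    apply le_antisymm
    · exact Nat.sInf_le ⟨L, rfl, hSGS⟩
    · refine le_csInf ⟨L.ncard, L, rfl, hSGS⟩ ?_
      rintro n ⟨S, rfl, hS⟩
      exact Set.ncard_le_ncard (hsubL S hS) (Set.toFinite S)
  refine ⟨hSGS, part2, ?_⟩
  have hmem1 : (1 : ℕ) ∈ {k | ∃ (S X : Set V) (p : ∀ u v : V, T.Walk u v),
      StrongGeodeticChoice T p ∧ S.ncard = sg T ∧
      (∀ w : V, ∃ u ∈ S, ∃ v ∈ S, w ∈ (p u v).support) ∧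
      X ⊆ S ∧ X.ncard = k ∧
      (∀ w : V, ∃ u ∈ X, ∃ v ∈ S, w ∈ (p u v).support)} := by
    refine ⟨L, {u₀}, tpath hT, hch, hsg.symm, ?_, ?_, Set.ncard_singleton u₀, ?_⟩
    · intro w
      obtain ⟨v, hv, hw⟩ := cover w
      exact ⟨u₀, hu₀L, v, hv, hw⟩
    · intro z hz
      rw [Set.mem_singleton_iff] at hz
      exact hz ▸ hu₀L
    · intro w
      obtain ⟨v, hv, hw⟩ := cover w
      exact ⟨u₀, rfl, v, hv, hw⟩
  have hle : sgc T ≤ 1 := Nat.sInf_le hmem1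
  have hne0 : sgc T ≠ 0 := by
    intro h0
    rw [sgc, Nat.sInf_eq_zero] at h0
    rcases h0 with h0 | h0
    · obtain ⟨S, X, p', -, -, -, -, hX0, hcovX⟩ := h0
      obtain ⟨u, hu, -⟩ := hcovX w₀
      rw [(Set.ncard_eq_zero (Set.toFinite X)).mp hX0] at hu
      exact hu
    · rw [h0] at hmem1
      exact hmem1
  omega
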